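/- A cellular automaton Φ : α^ℤ → α^ℤ with quiescent state B is uniquely ergodic if and only if d_Φ(B, x) = 1 holds for all x in the limit set Ω_Φ; and in that case, the convergence of (1/n)·|{t ∈ [0, n−1] : Φ^t(x)_0 = B}| to 1 is uniform in x ∈ Ω_Φ. -/

import Mathlib

open MeasureTheory Filter Set
set_option linter.unusedSectionVars false
set_option maxHeartbeats 1000000



lemma tendsto_one_of_liminf_eq_one {u : ℕ → ℝ} (h0 : ∀ n, 0 ≤ u n) (h1 : ∀ n, u n ≤ 1)
    (hl : Filter.liminf u Filter.atTop = 1) : Filter.Tendsto u Filter.atTop (nhds 1) := by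
  have hb1 : Filter.IsBoundedUnder (· ≤ ·) Filter.atTop u := Filter.isBoundedUnder_of ⟨1, h1⟩
  have hb2 : Filter.IsBoundedUnder (· ≥ ·) Filter.atTop u := Filter.isBoundedUnder_of ⟨0, h0⟩
  have hls : Filter.limsup u Filter.atTop = 1 := by
    refine le_antisymm ?_ ?_
    · exact Filter.limsup_le_of_le hb2.isCoboundedUnder_le (Filter.Eventually.of_forall h1)
    · rw [← hl]; exact Filter.liminf_le_limsup hb1 hb2
  exact tendsto_of_liminf_eq_limsup hl hls hb1 hb2



namespace CAErg

variable {α : Type} [Fintype α] [DecidableEq α] [TopologicalSpace α] [DiscreteTopology α]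
  [MeasurableSpace α] [BorelSpace α]

/-- shift by `k` -/
def shf (k : ℤ) (x : ℤ → α) : ℤ → α := fun j => x (j + k)

lemma shf_shf (k : ℤ) (x : ℤ → α) : shf 1 (shf k x) = shf (k + 1) x := by
  funext j
  show x (j + 1 + k) = x (j + (k + 1))
  congr 1; ring

lemma phi_shf {Φ : (ℤ → α) → (ℤ → α)}
    (hcomm : ∀ x : ℤ → α, Φ (fun i => x (i + 1)) = fun i => Φ x (i + 1)) :
    ∀ (k : ℤ) (x : ℤ → α), Φ (shf k x) = shf k (Φ x) := by
  have h1 : ∀ x : ℤ → α, Φ (shf 1 x) = shf 1 (Φ x) := fun x => hcomm x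
  have hinj : ∀ y z : ℤ → α, shf 1 y = shf 1 z → y = z := by
    intro y z h; funext j
    have := congrFun h (j - 1)
    simpa [shf] using this
  intro k
  induction k using Int.induction_on with
  | zero =>
      have h0 : ∀ y : ℤ → α, shf 0 y = y := fun y => funext fun j => congrArg y (add_zero j)
      intro x; rw [h0, h0]
  | succ k ih =>
      intro x
      have : Φ (shf 1 (shf k x)) = shf 1 (shf k (Φ x)) := by rw [h1, ih]
      simpa [shf_shf] using this
  | pred k ih =>
      intro x
      have hk : (-(k : ℤ) - 1) + 1 = -(k : ℤ) := by ring
      have e1 : shf 1 (shf (-(k:ℤ) - 1) x) = shf (-(k:ℤ)) x := by rw [shf_shf, hk]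
      have e2 : shf 1 (shf (-(k:ℤ) - 1) (Φ x)) = shf (-(k:ℤ)) (Φ x) := by rw [shf_shf, hk]
      apply hinj
      rw [← h1, e1, e2, ih]

lemma iter_shf {Φ : (ℤ → α) → (ℤ → α)}
    (hcomm : ∀ x : ℤ → α, Φ (fun i => x (i + 1)) = fun i => Φ x (i + 1))
    (t : ℕ) (k : ℤ) (x : ℤ → α) : Φ^[t] (shf k x) = shf k (Φ^[t] x) := by
  induction t with
  | zero => simp
  | succ t ih => rw [Function.iterate_succ_apply', ih, phi_shf hcomm, Function.iterate_succ_apply']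

lemma shf_mem_limitSet {Φ : (ℤ → α) → (ℤ → α)}
    (hcomm : ∀ x : ℤ → α, Φ (fun i => x (i + 1)) = fun i => Φ x (i + 1))
    {x : ℤ → α} (hx : x ∈ ⋂ n : ℕ, Φ^[n] '' Set.univ) (k : ℤ) :
    shf k x ∈ ⋂ n : ℕ, Φ^[n] '' Set.univ := by
  simp only [Set.mem_iInter] at hx ⊢
  intro n
  obtain ⟨y, -, hy⟩ := hx n
  exact ⟨shf k y, trivial, by rw [iter_shf hcomm, hy]⟩

variable {Φ : (ℤ → α) → (ℤ → α)}

lemma iterinv (hcont : Continuous Φ) {μ : Measure (ℤ → α)}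
    (hinv : ∀ A : Set (ℤ → α), MeasurableSet A → μ (Φ ⁻¹' A) = μ A) :
    ∀ (n : ℕ) (A : Set (ℤ → α)), MeasurableSet A → μ ((Φ^[n]) ⁻¹' A) = μ A := by
  intro n
  induction n with
  | zero => intro A _; rfl
  | succ n ih =>
      intro A hA
      rw [Function.iterate_succ', Set.preimage_comp]
      rw [ih _ (hcont.measurable hA), hinv A hA]

lemma measure_limitSet (hcont : Continuous Φ) {μ : Measure (ℤ → α)}
    (hprob : IsProbabilityMeasure μ)
    (hinv : ∀ A : Set (ℤ → α), MeasurableSet A → μ (Φ ⁻¹' A) = μ A) :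
    MeasurableSet (⋂ n : ℕ, Φ^[n] '' Set.univ) ∧ μ (⋂ n : ℕ, Φ^[n] '' Set.univ) = 1 := by
  have hImm : ∀ n : ℕ, MeasurableSet (Φ^[n] '' Set.univ) := fun n =>
    ((isCompact_univ.image (hcont.iterate n)).isClosed).measurableSet
  have hIm1 : ∀ n : ℕ, μ (Φ^[n] '' Set.univ) = 1 := by
    intro n
    have hpre : (Φ^[n]) ⁻¹' (Φ^[n] '' Set.univ) = Set.univ :=
      Set.eq_univ_of_forall fun x => ⟨x, trivial, rfl⟩
    have := iterinv hcont hinv n _ (hImm n)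
    rw [hpre] at this
    rw [← this, measure_univ]
  refine ⟨MeasurableSet.iInter hImm, ?_⟩
  rw [← prob_compl_eq_zero_iff (MeasurableSet.iInter hImm), Set.compl_iInter]
  exact measure_iUnion_null fun n => (prob_compl_eq_zero_iff (hImm n)).2 (hIm1 n)

lemma coord_one (hcont : Continuous Φ)
    (hcomm : ∀ x : ℤ → α, Φ (fun i => x (i + 1)) = fun i => Φ x (i + 1))
    (B : α)
    (hpt : ∀ x ∈ ⋂ n : ℕ, Φ^[n] '' Set.univ,
        Filter.liminf (fun n : ℕ =>
            (((Finset.range n).filter fun t => Φ^[t] x 0 = B).card : ℝ) / n)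
          Filter.atTop = 1)
    {μ : Measure (ℤ → α)} (hprob : IsProbabilityMeasure μ)
    (hinv : ∀ A : Set (ℤ → α), MeasurableSet A → μ (Φ ⁻¹' A) = μ A) (i : ℤ) :
    μ {z : ℤ → α | z i = B} = 1 := by
  obtain ⟨hΩm, hΩ1⟩ := measure_limitSet hcont hprob hinv
  have hSm : MeasurableSet {z : ℤ → α | z i = B} := by
    have : {z : ℤ → α | z i = B} = (fun z : ℤ → α => z i) ⁻¹' {B} := by ext z; simp
    rw [this]; exact measurable_pi_apply i (measurableSet_singleton B)
  set S : Set (ℤ → α) := {z : ℤ → α | z i = B} with hS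
  -- pointwise convergence on the limit set
  have htend : ∀ x ∈ ⋂ n : ℕ, Φ^[n] '' Set.univ,
      Filter.Tendsto (fun n : ℕ =>
          (((Finset.range n).filter fun t => Φ^[t] x i = B).card : ℝ) / n)
        Filter.atTop (nhds 1) := by
    intro x hx
    have hcard : ∀ n : ℕ, ((Finset.range n).filter fun t => Φ^[t] (shf i x) 0 = B)
        = ((Finset.range n).filter fun t => Φ^[t] x i = B) := by
      intro n
      apply Finset.filter_congr
      intro t _
      rw [iter_shf hcomm]
      show ((Φ^[t] x) (0 + i) = B) ↔ _
      rw [zero_add]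
    have hlim : Filter.liminf (fun n : ℕ =>
        (((Finset.range n).filter fun t => Φ^[t] x i = B).card : ℝ) / n)
        Filter.atTop = 1 := by
      have := hpt (shf i x) (shf_mem_limitSet hcomm hx i)
      simpa only [hcard] using this
    refine tendsto_one_of_liminf_eq_one (fun n => by positivity) ?_ hlim
    intro n
    rcases Nat.eq_zero_or_pos n with h | h
    · simp [h]
    · rw [div_le_one (by exact_mod_cast h)]
      exact_mod_cast (Finset.card_filter_le _ _).trans_eq (Finset.card_range n)
  -- ENNReal Birkhoff averages
  set G : ℕ → (ℤ → α) → ENNReal := fun n z =>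
    (∑ t ∈ Finset.range n, ((Φ^[t]) ⁻¹' S).indicator (fun _ => (1 : ENNReal)) z) / n with hG
  have hpre_meas : ∀ t : ℕ, MeasurableSet ((Φ^[t]) ⁻¹' S) := fun t =>
    (hcont.measurable.iterate t) hSm
  have hGmeas : ∀ n, Measurable (G n) := by
    intro n
    apply Measurable.div_const
    exact Finset.measurable_sum _ fun t _ =>
      Measurable.indicator measurable_const (hpre_meas t)
  have hsum_card : ∀ (n : ℕ) (z : ℤ → α),
      (∑ t ∈ Finset.range n, ((Φ^[t]) ⁻¹' S).indicator (fun _ => (1 : ENNReal)) z)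
        = (((Finset.range n).filter fun t => Φ^[t] z i = B).card : ENNReal) := by
    intro n z
    classical
    rw [← Finset.sum_boole (fun t => Φ^[t] z i = B) (Finset.range n)]
    apply Finset.sum_congr rfl
    intro t _
    rw [Set.indicator_apply]
    congr 1
  have hG1 : ∀ x ∈ ⋂ n : ℕ, Φ^[n] '' Set.univ,
      Filter.liminf (fun n => G n x) Filter.atTop = 1 := by
    intro x hx
    have hGo : ∀ n : ℕ, 1 ≤ n → G n x = ENNReal.ofReal
        ((((Finset.range n).filter fun t => Φ^[t] x i = B).card : ℝ) / n) := by
      intro n hn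
      rw [hG]
      simp only []
      rw [hsum_card n x,
        ENNReal.ofReal_div_of_pos (by exact_mod_cast hn),
        ENNReal.ofReal_natCast, ENNReal.ofReal_natCast]
    have : Filter.Tendsto (fun n => G n x) Filter.atTop (nhds (ENNReal.ofReal 1)) := by
      refine (ENNReal.tendsto_ofReal (htend x hx)).congr' ?_
      filter_upwards [Filter.eventually_ge_atTop 1] with n hn
      exact (hGo n hn).symm
    rw [ENNReal.ofReal_one] at this
    exact this.liminf_eq
  have hGint : ∀ n : ℕ, 1 ≤ n → ∫⁻ z, G n z ∂μ = μ S := by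
    intro n hn
    have hn0 : (n : ENNReal) ≠ 0 := by exact_mod_cast Nat.one_le_iff_ne_zero.mp hn
    simp only [hG, div_eq_mul_inv]
    rw [lintegral_mul_const' _ _ (by simp [ENNReal.inv_ne_top, hn0]),
      lintegral_finset_sum _ fun t _ => Measurable.indicator measurable_const (hpre_meas t)]
    have : ∀ t ∈ Finset.range n,
        ∫⁻ z, ((Φ^[t]) ⁻¹' S).indicator (fun _ => (1 : ENNReal)) z ∂μ = μ S := by
      intro t _
      have : ((Φ^[t]) ⁻¹' S).indicator (fun _ => (1 : ENNReal)) =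
          ((Φ^[t]) ⁻¹' S).indicator 1 := rfl
      rw [this, lintegral_indicator_one (hpre_meas t)]
      exact iterinv hcont hinv t S hSm
    rw [Finset.sum_congr rfl this, Finset.sum_const, Finset.card_range, nsmul_eq_mul,
      mul_comm (n : ENNReal) (μ S), mul_assoc,
      ENNReal.mul_inv_cancel hn0 (ENNReal.natCast_ne_top n), mul_one]
  haveI := hprob
  have key : (1 : ENNReal) ≤ μ S := by
    calc (1 : ENNReal) = μ (⋂ n : ℕ, Φ^[n] '' Set.univ) := hΩ1.symm
      _ = ∫⁻ z, (⋂ n : ℕ, Φ^[n] '' Set.univ).indicator 1 z ∂μ :=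
          (lintegral_indicator_one hΩm).symm
      _ ≤ ∫⁻ z, Filter.liminf (fun n => G n z) Filter.atTop ∂μ := by
          apply lintegral_mono
          intro z
          by_cases hz : z ∈ ⋂ n : ℕ, Φ^[n] '' Set.univ
          · rw [Set.indicator_of_mem hz]
            show (1 : ENNReal) ≤ Filter.liminf (fun n => G n z) Filter.atTop
            rw [hG1 z hz]
          · rw [Set.indicator_of_notMem hz]; exact zero_le
      _ ≤ Filter.liminf (fun n => ∫⁻ z, G n z ∂μ) Filter.atTop := lintegral_liminf_le hGmeas
      _ = μ S := by
          rw [Filter.liminf_congr (u := fun n => ∫⁻ z, G n z ∂μ) (v := fun _ => μ S) ?_]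
          · exact Filter.liminf_const _
          · filter_upwards [Filter.eventually_ge_atTop 1] with n hn
            exact hGint n hn
  exact le_antisymm prob_le_one key


lemma dirac_invariant (hcont : Continuous Φ) (B : α) (hq : Φ (fun _ => B) = fun _ => B) :
    IsProbabilityMeasure (Measure.dirac (fun _ => B : ℤ → α)) ∧
      ∀ A : Set (ℤ → α), MeasurableSet A →
        Measure.dirac (fun _ => B : ℤ → α) (Φ ⁻¹' A) = Measure.dirac (fun _ => B : ℤ → α) A := by
  refine ⟨inferInstance, fun A hA => ?_⟩
  rw [Measure.dirac_apply' _ (hcont.measurable hA), Measure.dirac_apply' _ hA]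
  by_cases hB : (fun _ => B : ℤ → α) ∈ A
  · rw [Set.indicator_of_mem hB, Set.indicator_of_mem (by rw [Set.mem_preimage, hq]; exact hB)]
  · rw [Set.indicator_of_notMem hB,
      Set.indicator_of_notMem (by rw [Set.mem_preimage, hq]; exact hB)]

lemma eq_dirac_of_coord (B : α) {μ : Measure (ℤ → α)} (hprob : IsProbabilityMeasure μ)
    (hcoord : ∀ i : ℤ, μ {z : ℤ → α | z i = B} = 1) :
    μ = Measure.dirac (fun _ => B : ℤ → α) := by
  haveI := hprob
  have hSm : ∀ i : ℤ, MeasurableSet {z : ℤ → α | z i = B} := by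
    intro i
    have : {z : ℤ → α | z i = B} = (fun z : ℤ → α => z i) ⁻¹' {B} := by ext z; simp
    rw [this]; exact measurable_pi_apply i (measurableSet_singleton B)
  have hTset : (⋂ i : ℤ, {z : ℤ → α | z i = B}) = {(fun _ => B : ℤ → α)} := by
    ext z
    simp only [Set.mem_iInter, Set.mem_setOf_eq, Set.mem_singleton_iff, funext_iff]
  have hTm : MeasurableSet (⋂ i : ℤ, {z : ℤ → α | z i = B}) := MeasurableSet.iInter hSm
  have hT1 : μ (⋂ i : ℤ, {z : ℤ → α | z i = B}) = 1 := by
    rw [← prob_compl_eq_zero_iff hTm, Set.compl_iInter]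
    exact measure_iUnion_null fun i => (prob_compl_eq_zero_iff (hSm i)).2 (hcoord i)
  refine Measure.ext fun s hs => ?_
  rw [Measure.dirac_apply' _ hs]
  by_cases hB : (fun _ => B : ℤ → α) ∈ s
  · rw [Set.indicator_of_mem hB]
    refine le_antisymm prob_le_one ?_
    calc (1 : ENNReal) = μ (⋂ i : ℤ, {z : ℤ → α | z i = B}) := hT1.symm
      _ ≤ μ s := by
          apply measure_mono
          rw [hTset]
          exact Set.singleton_subset_iff.2 hB
    -- done? need `Pi.one_apply` maybe
  · rw [Set.indicator_of_notMem hB]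
    have hsub : s ⊆ (⋂ i : ℤ, {z : ℤ → α | z i = B})ᶜ := by
      intro z hz hzT
      rw [hTset] at hzT
      exact hB (hzT ▸ hz)
    refine measure_mono_null hsub ?_
    exact (prob_compl_eq_zero_iff hTm).2 hT1

open Classical in
/-- empirical average of visits to `A` along the first `m` steps of the `Φ`-orbit of `y` -/
noncomputable def emp (Φ : (ℤ → α) → (ℤ → α)) (y : ℤ → α) (m : ℕ) (A : Set (ℤ → α)) : ℝ :=
  (∑ t ∈ Finset.range m, if Φ^[t] y ∈ A then (1 : ℝ) else 0) / m

lemma ite01_nonneg (p : Prop) [Decidable p] : (0:ℝ) ≤ if p then (1:ℝ) else 0 := by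
  split <;> norm_num

lemma ite01_le_one (p : Prop) [Decidable p] : (if p then (1:ℝ) else 0) ≤ 1 := by
  split <;> norm_num

variable {Φ : (ℤ → α) → (ℤ → α)} {y : ℤ → α} {m : ℕ}

lemma emp_nonneg (A : Set (ℤ → α)) : 0 ≤ emp Φ y m A := by
  classical
  unfold emp
  apply div_nonneg ?_ (by positivity)
  exact Finset.sum_nonneg fun t _ => ite01_nonneg _

lemma emp_le_one (hm : 1 ≤ m) (A : Set (ℤ → α)) : emp Φ y m A ≤ 1 := by
  classical
  unfold emp
  rw [div_le_one (by exact_mod_cast hm)]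
  calc (∑ t ∈ Finset.range m, if Φ^[t] y ∈ A then (1 : ℝ) else 0)
      ≤ ∑ t ∈ Finset.range m, 1 := Finset.sum_le_sum fun t _ => ite01_le_one _
    _ = m := by simp

lemma emp_univ (hm : 1 ≤ m) : emp Φ y m Set.univ = 1 := by
  classical
  unfold emp
  simp only [Set.mem_univ, if_true, Finset.sum_const, Finset.card_range, nsmul_eq_mul, mul_one]
  rw [div_self (by exact_mod_cast Nat.one_le_iff_ne_zero.mp hm)]

lemma emp_mono {A B : Set (ℤ → α)} (h : A ⊆ B) : emp Φ y m A ≤ emp Φ y m B := by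
  classical
  rcases Nat.eq_zero_or_pos m with rfl | hm
  · unfold emp; simp
  · unfold emp
    apply div_le_div_of_nonneg_right ?_ (by positivity)
    apply Finset.sum_le_sum
    intro t _
    by_cases hA : Φ^[t] y ∈ A
    · simp [hA, h hA]
    · simp only [if_neg hA]; exact ite01_nonneg _

lemma emp_union {A B : Set (ℤ → α)} (h : Disjoint A B) :
    emp Φ y m (A ∪ B) = emp Φ y m A + emp Φ y m B := by
  classical
  unfold emp
  rw [← add_div]
  congr 1
  rw [← Finset.sum_add_distrib]
  apply Finset.sum_congr rfl
  intro t _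
  by_cases hA : Φ^[t] y ∈ A
  · have hB : Φ^[t] y ∉ B := Set.disjoint_left.mp h hA
    simp [hA, hB]
  · by_cases hB : Φ^[t] y ∈ B <;> simp [hA, hB, Set.mem_union]

lemma emp_preimage (A : Set (ℤ → α)) (hm : 1 ≤ m) :
    |emp Φ y m (Φ ⁻¹' A) - emp Φ y m A| ≤ 1 / m := by
  classical
  set f : ℕ → ℝ := fun t => if Φ^[t] y ∈ A then (1:ℝ) else 0 with hf
  have hshift : (∑ t ∈ Finset.range m, if Φ^[t] y ∈ Φ ⁻¹' A then (1:ℝ) else 0)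
      = ∑ t ∈ Finset.range m, f (t + 1) := by
    apply Finset.sum_congr rfl
    intro t _
    have hiff : (Φ^[t] y ∈ Φ ⁻¹' A) = (Φ^[t+1] y ∈ A) := by
      rw [Set.mem_preimage, ← Function.iterate_succ_apply' Φ t y]
    simp only [hf, hiff]
  have hsum : (∑ t ∈ Finset.range m, f (t + 1))
      = (∑ t ∈ Finset.range m, f t) + f m - f 0 := by
    have h1 := Finset.sum_range_succ' f m
    have h2 := Finset.sum_range_succ f m
    rw [h2] at h1
    linarith
  have hf01 : ∀ t, 0 ≤ f t ∧ f t ≤ 1 := fun t => ⟨ite01_nonneg _, ite01_le_one _⟩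
  have hmpos : (0 : ℝ) < m := by exact_mod_cast hm
  unfold emp
  rw [hshift, hsum, div_sub_div_same, abs_div, abs_of_pos hmpos]
  apply div_le_div_of_nonneg_right ?_ hmpos.le
  have h0 := hf01 0
  have hmm := hf01 m
  rw [abs_le]
  constructor <;> linarith

/-- From a sequence of empirical measures along orbit segments whose limits along an
ultrafilter exist, we build an invariant Borel probability measure. -/
lemma second_measure (hcont : Continuous Φ) (x : ℕ → ℤ → α) (n : ℕ → ℕ)
    (𝒰 : Ultrafilter ℕ) (h𝒰 : (𝒰 : Filter ℕ) ≤ Filter.atTop) (hn1 : ∀ k, k < n k)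
    (c : Set (ℤ → α) → ℝ)
    (hc : ∀ A, Filter.Tendsto (fun k => emp Φ (x k) (n k) A) 𝒰 (nhds (c A))) :
    ∃ μ : Measure (ℤ → α), IsProbabilityMeasure μ ∧
      (∀ A : Set (ℤ → α), MeasurableSet A → μ (Φ ⁻¹' A) = μ A) ∧
      ∀ A : Set (ℤ → α), IsClopen A → μ A = ENNReal.ofReal (c A) := by
  have hone : ∀ k, 1 ≤ n k := fun k => Nat.lt_of_le_of_lt (Nat.zero_le k) (hn1 k)
  have hc0 : ∀ A : Set (ℤ → α), 0 ≤ c A := fun A =>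
    ge_of_tendsto (hc A) (Filter.Eventually.of_forall fun k => emp_nonneg A)
  have hcu : c Set.univ = 1 :=
    tendsto_nhds_unique (hc Set.univ)
      (tendsto_const_nhds.congr fun k => (emp_univ (hone k)).symm)
  have hcmono : ∀ A B : Set (ℤ → α), A ⊆ B → c A ≤ c B := fun A B h =>
    le_of_tendsto_of_tendsto' (hc A) (hc B) fun k => emp_mono h
  have hcadd : ∀ A B : Set (ℤ → α), Disjoint A B → c (A ∪ B) = c A + c B := fun A B h =>
    tendsto_nhds_unique (hc (A ∪ B)) (((hc A).add (hc B)).congr fun k => (emp_union h).symm)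
  have hcsub : ∀ A B : Set (ℤ → α), c (A ∪ B) ≤ c A + c B := by
    intro A B
    have hdisj : Disjoint A (B \ A) := Set.disjoint_left.mpr fun z hz hzB => hzB.2 hz
    have h1 : c (A ∪ B) = c A + c (B \ A) := by
      rw [← Set.union_diff_self]
      exact hcadd _ _ hdisj
    rw [h1]
    exact add_le_add le_rfl (hcmono _ _ Set.diff_subset)
  have hcinv : ∀ A : Set (ℤ → α), c (Φ ⁻¹' A) = c A := by
    intro A
    apply tendsto_nhds_unique (hc (Φ ⁻¹' A))
    have hdiff : Filter.Tendsto
        (fun k => emp Φ (x k) (n k) (Φ ⁻¹' A) - emp Φ (x k) (n k) A) 𝒰 (nhds 0) := by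
      apply squeeze_zero_norm (fun k => emp_preimage A (hone k))
      have hnn : Filter.Tendsto n Filter.atTop Filter.atTop :=
        Filter.tendsto_atTop_mono (fun k => (hn1 k).le) Filter.tendsto_id
      have h0 : Filter.Tendsto (fun m : ℕ => 1 / (m : ℝ)) Filter.atTop (nhds 0) :=
        tendsto_one_div_atTop_nhds_zero_nat
      exact (h0.comp hnn).mono_left h𝒰
    have h2 := hdiff.add (hc A)
    rw [zero_add] at h2
    exact h2.congr fun k => by ring
  -- build the content
  set μC : MeasureTheory.Content (ℤ → α) :=
    { toFun := fun K => Real.toNNReal (c ↑K)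
      mono' := fun K₁ K₂ h => Real.toNNReal_mono (hcmono _ _ h)
      sup_disjoint' := fun K₁ K₂ hd _ _ => by
        show Real.toNNReal (c ↑(K₁ ⊔ K₂)) = _
        rw [TopologicalSpace.Compacts.coe_sup, hcadd _ _ hd,
          Real.toNNReal_add (hc0 _) (hc0 _)]
      sup_le' := fun K₁ K₂ => by
        show Real.toNNReal (c ↑(K₁ ⊔ K₂)) ≤ _
        rw [TopologicalSpace.Compacts.coe_sup]
        calc Real.toNNReal (c (↑K₁ ∪ ↑K₂))
            ≤ Real.toNNReal (c ↑K₁ + c ↑K₂) :=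
              Real.toNNReal_mono (hcsub _ _)
          _ = Real.toNNReal (c ↑K₁) + Real.toNNReal (c ↑K₂) :=
              Real.toNNReal_add (hc0 _) (hc0 _) } with hμC
  set μm : Measure (ℤ → α) := μC.measure with hμm
  have hclopen_meas : ∀ A : Set (ℤ → α), IsClopen A → μm A = ENNReal.ofReal (c A) := by
    intro A hA
    have hAcpt : IsCompact A := hA.isClosed.isCompact
    rw [hμm, MeasureTheory.Content.measure_apply _ hA.isOpen.measurableSet,
      μC.outerMeasure_of_isOpen A hA.isOpen]
    have h1 : μC.innerContent ⟨A, hA.isOpen⟩ ≤ μC ⟨A, hAcpt⟩ :=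
      μC.innerContent_le ⟨A, hA.isOpen⟩ ⟨A, hAcpt⟩ subset_rfl
    have h2 : μC ⟨A, hAcpt⟩ ≤ μC.innerContent ⟨A, hA.isOpen⟩ :=
      μC.le_innerContent ⟨A, hAcpt⟩ ⟨A, hA.isOpen⟩ subset_rfl
    have : μC.innerContent ⟨A, hA.isOpen⟩ = μC ⟨A, hAcpt⟩ := le_antisymm h1 h2
    rw [this]
    rfl
  haveI hprob : IsProbabilityMeasure μm :=
    ⟨by rw [hclopen_meas Set.univ isClopen_univ, hcu, ENNReal.ofReal_one]⟩
  have hΦm : Measurable Φ := hcont.measurable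
  have hmap : Measure.map Φ μm = μm := by
    have hgen : (inferInstance : MeasurableSpace (ℤ → α)) =
        MeasurableSpace.generateFrom {A : Set (ℤ → α) | IsClopen A} := by
      rw [BorelSpace.measurable_eq (α := ℤ → α)]
      exact TopologicalSpace.IsTopologicalBasis.borel_eq_generateFrom isTopologicalBasis_isClopen
    haveI : IsProbabilityMeasure (Measure.map Φ μm) :=
      Measure.isProbabilityMeasure_map hΦm.aemeasurable
    refine MeasureTheory.ext_of_generate_finite _ hgen ?_ ?_ ?_
    · intro A hA B hB _
      exact hA.inter hB
    · intro A hA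
      rw [Measure.map_apply hΦm hA.isOpen.measurableSet,
        hclopen_meas _ (hA.preimage hcont), hclopen_meas _ hA, hcinv]
    · rw [Measure.map_apply hΦm MeasurableSet.univ, Set.preimage_univ]
  refine ⟨μm, hprob, fun A hA => ?_, hclopen_meas⟩
  rw [← Measure.map_apply hΦm hA, hmap]


lemma emp_eq_card (Φ : (ℤ → α) → (ℤ → α)) (y : ℤ → α) (m : ℕ) (B : α) :
    emp Φ y m {z : ℤ → α | z 0 = B}
      = (((Finset.range m).filter fun t => Φ^[t] y 0 = B).card : ℝ) / m := by
  unfold emp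
  congr 1
  refine Eq.trans ?_ (Finset.sum_boole (fun t => Φ^[t] y 0 = B) (Finset.range m))
  apply Finset.sum_congr rfl
  intro t _
  by_cases h : Φ^[t] y 0 = B <;> simp [Set.mem_setOf_eq, h]

lemma unique_of_density (hcont : Continuous Φ)
    (hcomm : ∀ x : ℤ → α, Φ (fun i => x (i + 1)) = fun i => Φ x (i + 1))
    (B : α) (hq : Φ (fun _ => B) = fun _ => B)
    (hpt : ∀ x ∈ ⋂ n : ℕ, Φ^[n] '' Set.univ,
        Filter.liminf (fun n : ℕ =>
            (((Finset.range n).filter fun t => Φ^[t] x 0 = B).card : ℝ) / n)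
          Filter.atTop = 1) :
    ∃! μ : Measure (ℤ → α), IsProbabilityMeasure μ ∧
      ∀ A : Set (ℤ → α), MeasurableSet A → μ (Φ ⁻¹' A) = μ A := by
  obtain ⟨h1, h2⟩ := dirac_invariant hcont B hq
  refine ⟨Measure.dirac (fun _ => B), ⟨h1, h2⟩, ?_⟩
  rintro μ ⟨hprob, hinv⟩
  exact eq_dirac_of_coord B hprob fun i => coord_one hcont hcomm B hpt hprob hinv i

lemma uniform_of_unique (hcont : Continuous Φ) (B : α) (hq : Φ (fun _ => B) = fun _ => B)
    (hEU : ∃! μ : Measure (ℤ → α), IsProbabilityMeasure μ ∧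
        ∀ A : Set (ℤ → α), MeasurableSet A → μ (Φ ⁻¹' A) = μ A) :
    ∀ ε : ℝ, 0 < ε → ∃ N : ℕ, ∀ n : ℕ, N ≤ n → ∀ x ∈ ⋂ n : ℕ, Φ^[n] '' Set.univ,
      |(((Finset.range n).filter fun t => Φ^[t] x 0 = B).card : ℝ) / n - 1| < ε := by
  by_contra hcon
  push_neg at hcon
  obtain ⟨ε, hε, hbad⟩ := hcon
  choose n hn x hxΩ hb using fun k : ℕ => hbad (k + 1)
  have hn1 : ∀ k, k < n k := fun k => Nat.lt_of_lt_of_le (Nat.lt_succ_self k) (hn k)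
  have hone : ∀ k, 1 ≤ n k := fun k => Nat.lt_of_le_of_lt (Nat.zero_le k) (hn1 k)
  set 𝒰 : Ultrafilter ℕ := Ultrafilter.of Filter.atTop with h𝒰def
  have h𝒰 : (𝒰 : Filter ℕ) ≤ Filter.atTop := Ultrafilter.of_le _
  have hIcc : ∀ A : Set (ℤ → α), ∃ r ∈ Set.Icc (0:ℝ) 1,
      Filter.Tendsto (fun k => emp Φ (x k) (n k) A) 𝒰 (nhds r) := by
    intro A
    have hle : (𝒰.map (fun k => emp Φ (x k) (n k) A) : Filter ℝ) ≤ 𝓟 (Set.Icc 0 1) := by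
      rw [Ultrafilter.coe_map, Filter.le_principal_iff, Filter.mem_map]
      exact Filter.univ_mem' fun k => ⟨emp_nonneg A, emp_le_one (hone k) A⟩
    obtain ⟨r, hr, hler⟩ :=
      (isCompact_Icc (a := (0:ℝ)) (b := 1)).ultrafilter_le_nhds (𝒰.map _) hle
    refine ⟨r, hr, ?_⟩
    rw [Filter.Tendsto]
    rw [Ultrafilter.coe_map] at hler
    exact hler
  choose c hc01 hctend using hIcc
  obtain ⟨μm, hμprob, hμinv, hμclop⟩ := second_measure hcont x n 𝒰 h𝒰 hn1 c hctend
  obtain ⟨w, hw, huniq⟩ := hEU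
  obtain ⟨hδ1, hδ2⟩ := dirac_invariant hcont B hq
  have hμδ : μm = Measure.dirac (fun _ => B : ℤ → α) :=
    (huniq μm ⟨hμprob, hμinv⟩).trans (huniq _ ⟨hδ1, hδ2⟩).symm
  set C0 : Set (ℤ → α) := {z : ℤ → α | z 0 = B} with hC0def
  have hC0 : IsClopen C0 := by
    have h : C0 = (fun z : ℤ → α => z 0) ⁻¹' {B} := by ext z; simp [hC0def]
    rw [h]
    exact (isClopen_discrete {B}).preimage (continuous_apply 0)
  have hval1 : μm C0 = ENNReal.ofReal (c C0) := hμclop C0 hC0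
  have hval2 : μm C0 = 1 := by
    rw [hμδ, Measure.dirac_apply' _ hC0.isOpen.measurableSet,
      Set.indicator_of_mem (show (fun _ => B : ℤ → α) ∈ C0 from rfl)]
    rfl
  have hcle : c C0 ≤ 1 - ε := by
    apply le_of_tendsto (hctend C0)
    apply Filter.Eventually.of_forall
    intro k
    have he : emp Φ (x k) (n k) C0
        = (((Finset.range (n k)).filter fun t => Φ^[t] (x k) 0 = B).card : ℝ) / (n k) :=
      emp_eq_card Φ (x k) (n k) B
    have h1 : emp Φ (x k) (n k) C0 ≤ 1 := emp_le_one (hone k) C0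
    have hbk := hb k
    rw [← he] at hbk
    have habs : |emp Φ (x k) (n k) C0 - 1| = 1 - emp Φ (x k) (n k) C0 := by
      rw [abs_of_nonpos (by linarith)]; ring
    rw [habs] at hbk
    linarith
  have hcontr : (1 : ENNReal) ≤ ENNReal.ofReal (1 - ε) := by
    calc (1 : ENNReal) = μm C0 := hval2.symm
      _ = ENNReal.ofReal (c C0) := hval1
      _ ≤ ENNReal.ofReal (1 - ε) := ENNReal.ofReal_le_ofReal hcle
  rw [ENNReal.one_le_ofReal] at hcontr
  linarith

end CAErg

/-- A cellular automaton `Φ : α^ℤ → α^ℤ` with quiescent state `B` is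
uniquely ergodic iff `d_Φ(B, x) = 1` for every `x` in the limit set
`Ω_Φ = ⋂ₙ Φⁿ(α^ℤ)`; and in that case the convergence is uniform in `x ∈ Ω_Φ`. -/
theorem uniquelyErgodic_iff_blank_density_one_on_limitSet
    {α : Type} [Fintype α] [DecidableEq α] [TopologicalSpace α] [DiscreteTopology α]
    [MeasurableSpace α] [BorelSpace α]
    (B : α) (Φ : (ℤ → α) → (ℤ → α))
    (hcont : Continuous Φ)
    (hcomm : ∀ x : ℤ → α, Φ (fun i => x (i + 1)) = fun i => Φ x (i + 1))
    (hq : Φ (fun _ => B) = fun _ => B) :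
    ((∃! μ : Measure (ℤ → α), IsProbabilityMeasure μ ∧
          ∀ A : Set (ℤ → α), MeasurableSet A → μ (Φ ⁻¹' A) = μ A) ↔
      ∀ x ∈ ⋂ n : ℕ, Φ^[n] '' Set.univ,
        Filter.liminf (fun n : ℕ =>
            (((Finset.range n).filter fun t => Φ^[t] x 0 = B).card : ℝ) / n)
          Filter.atTop = 1) ∧
    ((∃! μ : Measure (ℤ → α), IsProbabilityMeasure μ ∧
          ∀ A : Set (ℤ → α), MeasurableSet A → μ (Φ ⁻¹' A) = μ A) →
      ∀ ε : ℝ, 0 < ε → ∃ N : ℕ, ∀ n : ℕ, N ≤ n → ∀ x ∈ ⋂ n : ℕ, Φ^[n] '' Set.univ,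
        |(((Finset.range n).filter fun t => Φ^[t] x 0 = B).card : ℝ) / n - 1| < ε) := by

  constructor
  · constructor
    · intro hEU x hx
      have huni := CAErg.uniform_of_unique hcont B hq hEU
      have htd : Filter.Tendsto (fun n : ℕ =>
          (((Finset.range n).filter fun t => Φ^[t] x 0 = B).card : ℝ) / n)
          Filter.atTop (nhds 1) := by
        rw [Metric.tendsto_atTop]
        intro ε hε
        obtain ⟨N, hN⟩ := huni ε hε
        exact ⟨N, fun n hn => by rw [Real.dist_eq]; exact hN n hn x hx⟩
      exact htd.liminf_eq
    · exact CAErg.unique_of_density hcont hcomm B hq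
  · exact CAErg.uniform_of_unique hcont B hq
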